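/- Let Ext₁ : {0,1}^n × {0,1}^{d₁} → {0,1}^{m₁} be a (k₁, ε₁) KL-extractor, let Waste₁ : {0,1}^n × {0,1}^{d₁} → {0,1}^w be such that (x,s) ↦ (Ext₁(x,s), Waste₁(x,s)) is injective, and let Ext₂ : {0,1}^w × {0,1}^{d₂} → {0,1}^{m₂} be a (k₂, ε₂) average-case KL-extractor with k₂ ≤ k₁ + d₁ − m₁. Then Ext((x,(s,t))) = (Ext₁(x,s), Ext₂(Waste₁(x,s), t)) is a (k₁, ε₁ + ε₂) KL-extractor. -/

import Mathlib

open scoped BigOperators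

/-- A probability mass function on a finite set. -/
def IsPMF {X : Type*} [Fintype X] (P : X → ℝ) : Prop :=
  (∀ x, 0 ≤ P x) ∧ ∑ x, P x = 1

/-- KL divergence (in bits) from a distribution on a finite set to uniform. -/
noncomputable def KLuFin {Y : Type*} [Fintype Y] (P : Y → ℝ) : ℝ :=
  ∑ y, P y * Real.logb 2 ((Fintype.card Y : ℝ) * P y)

lemma sum_rot {α β γ M : Type*} [Fintype α] [Fintype β] [Fintype γ] [AddCommMonoid M]
    (f : α → β → γ → M) :
    ∑ a, ∑ b, ∑ c, f a b c = ∑ c, ∑ a, ∑ b, f a b c := by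
  calc ∑ a, ∑ b, ∑ c, f a b c = ∑ a, ∑ c, ∑ b, f a b c :=
        Finset.sum_congr rfl fun a _ => Finset.sum_comm
    _ = ∑ c, ∑ a, ∑ b, f a b c := Finset.sum_comm

lemma sum_const_fun (d : ℕ) (c : ℝ) : ∑ _t : Fin d → Bool, c = (2:ℝ)^d * c := by
  rw [Finset.sum_const, Finset.card_univ]
  simp [Fintype.card_fun, nsmul_eq_mul]

lemma klu_chain {Y₁ Y₂ : Type*} [Fintype Y₁] [Fintype Y₂]
    (P : Y₁ × Y₂ → ℝ) (hP : ∀ p, 0 ≤ P p) :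
    KLuFin P = KLuFin (fun y₁ => ∑ y₂, P (y₁, y₂)) +
      ∑ y₁, (∑ y₂, P (y₁, y₂)) *
        KLuFin (fun y₂ => P (y₁, y₂) / ∑ y₂', P (y₁, y₂')) := by
  unfold KLuFin
  rw [Fintype.sum_prod_type, ← Finset.sum_add_distrib]
  refine Finset.sum_congr rfl fun y₁ _ => ?_
  by_cases h0 : (∑ y₂, P (y₁, y₂)) = 0
  · have hz : ∀ y₂, P (y₁, y₂) = 0 := fun y₂ =>
      (Finset.sum_eq_zero_iff_of_nonneg (fun i _ => hP (y₁, i))).mp h0 y₂ (Finset.mem_univ _)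
    simp [hz, h0]
  · set Q := ∑ y₂, P (y₁, y₂) with hQdef
    have hQpos : 0 < Q := lt_of_le_of_ne (Finset.sum_nonneg fun i _ => hP _) (Ne.symm h0)
    have h1 : Q * Real.logb 2 ((Fintype.card Y₁ : ℝ) * Q)
        = ∑ y₂, P (y₁, y₂) * Real.logb 2 ((Fintype.card Y₁ : ℝ) * Q) := by
      rw [← Finset.sum_mul]
    have h2 : Q * (∑ y₂, P (y₁, y₂) / Q *
          Real.logb 2 ((Fintype.card Y₂ : ℝ) * (P (y₁, y₂) / Q)))
        = ∑ y₂, P (y₁, y₂) *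
          Real.logb 2 ((Fintype.card Y₂ : ℝ) * (P (y₁, y₂) / Q)) := by
      rw [Finset.mul_sum]
      exact Finset.sum_congr rfl fun y₂ _ => by
        rw [← mul_assoc, mul_div_cancel₀ _ h0]
    simp only
    rw [h1, h2, ← Finset.sum_add_distrib]
    refine Finset.sum_congr rfl fun y₂ _ => ?_
    by_cases hp : P (y₁, y₂) = 0
    · simp [hp]
    · have hppos : 0 < P (y₁, y₂) := lt_of_le_of_ne (hP _) (Ne.symm hp)
      have hn₁ : Nonempty Y₁ := ⟨y₁⟩
      have hn₂ : Nonempty Y₂ := ⟨y₂⟩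
      have hc₁ : (0:ℝ) < Fintype.card Y₁ := by exact_mod_cast Fintype.card_pos
      have hc₂ : (0:ℝ) < Fintype.card Y₂ := by exact_mod_cast Fintype.card_pos
      have key : ((Fintype.card (Y₁ × Y₂) : ℝ)) * P (y₁, y₂)
          = ((Fintype.card Y₁ : ℝ) * Q) * ((Fintype.card Y₂ : ℝ) * (P (y₁, y₂) / Q)) := by
        rw [Fintype.card_prod]
        push_cast
        field_simp
      rw [key, Real.logb_mul (by positivity) (by positivity), mul_add]

/-- Re-extraction from leftovers: composing a KL-extractor with an average-case
KL-extractor applied to the "waste" of an injective extractor-condenser pair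
yields a KL-extractor with summed error. -/
theorem kl_reextraction (n d₁ m₁ w d₂ m₂ : ℕ) (k₁ k₂ ε₁ ε₂ : ℝ)
    (Ext₁ : (Fin n → Bool) → (Fin d₁ → Bool) → (Fin m₁ → Bool))
    (Waste₁ : (Fin n → Bool) → (Fin d₁ → Bool) → (Fin w → Bool))
    (Ext₂ : (Fin w → Bool) → (Fin d₂ → Bool) → (Fin m₂ → Bool))
    (hinj : Function.Injective (fun p : (Fin n → Bool) × (Fin d₁ → Bool) =>
      (Ext₁ p.1 p.2, Waste₁ p.1 p.2)))
    (hExt₁ : ∀ X : (Fin n → Bool) → ℝ, IsPMF X →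
      (∀ x, X x ≤ (2 : ℝ) ^ (-k₁)) →
      KLuFin (fun y : Fin m₁ → Bool =>
        ∑ x, ∑ s, X x * ((2 : ℝ) ^ d₁)⁻¹ * (if Ext₁ x s = y then 1 else 0)) ≤ ε₁)
    (hExt₂ : ∀ (ζ : Type) (_ : Fintype ζ),
      ∀ J : ζ × (Fin w → Bool) → ℝ, IsPMF J →
      (∑ z, (Finset.univ.sup' Finset.univ_nonempty fun x => J (z, x))
        ≤ (2 : ℝ) ^ (-k₂)) →
      ∑ z, (∑ x, J (z, x)) * KLuFin (fun y : Fin m₂ → Bool =>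
        ∑ x, ∑ t, (J (z, x) / ∑ x', J (z, x')) * ((2 : ℝ) ^ d₂)⁻¹
          * (if Ext₂ x t = y then 1 else 0)) ≤ ε₂)
    (hk₂ : k₂ ≤ k₁ + d₁ - m₁) :
    ∀ X : (Fin n → Bool) → ℝ, IsPMF X → (∀ x, X x ≤ (2 : ℝ) ^ (-k₁)) →
      KLuFin (fun p : (Fin m₁ → Bool) × (Fin m₂ → Bool) =>
        ∑ x, ∑ s, ∑ t, X x * ((2 : ℝ) ^ d₁)⁻¹ * ((2 : ℝ) ^ d₂)⁻¹ *
          (if Ext₁ x s = p.1 ∧ Ext₂ (Waste₁ x s) t = p.2 then 1 else 0))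
        ≤ ε₁ + ε₂ := by
  intro X hX hXk
  set J : (Fin m₁ → Bool) × (Fin w → Bool) → ℝ := fun q =>
    ∑ x, ∑ s, X x * ((2 : ℝ) ^ d₁)⁻¹ *
      (if Ext₁ x s = q.1 ∧ Waste₁ x s = q.2 then 1 else 0) with hJdef
  have hJnn : ∀ q, 0 ≤ J q := by
    intro q
    refine Finset.sum_nonneg fun x _ => Finset.sum_nonneg fun s _ => ?_
    have := hX.1 x
    positivity
  have hPnn : ∀ p : (Fin m₁ → Bool) × (Fin m₂ → Bool),
      0 ≤ ∑ x, ∑ s, ∑ t, X x * ((2 : ℝ) ^ d₁)⁻¹ * ((2 : ℝ) ^ d₂)⁻¹ *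
        (if Ext₁ x s = p.1 ∧ Ext₂ (Waste₁ x s) t = p.2 then 1 else 0) := by
    intro p
    refine Finset.sum_nonneg fun x _ => Finset.sum_nonneg fun s _ =>
      Finset.sum_nonneg fun t _ => ?_
    have := hX.1 x
    positivity
  -- marginal of the joint output distribution
  have hmargP : ∀ z : Fin m₁ → Bool,
      (∑ y₂ : Fin m₂ → Bool, ∑ x, ∑ s, ∑ t, X x * ((2 : ℝ) ^ d₁)⁻¹ * ((2 : ℝ) ^ d₂)⁻¹ *
        (if Ext₁ x s = z ∧ Ext₂ (Waste₁ x s) t = y₂ then 1 else 0))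
      = ∑ x, ∑ s, X x * ((2 : ℝ) ^ d₁)⁻¹ * (if Ext₁ x s = z then 1 else 0) := by
    intro z
    rw [Finset.sum_comm]
    refine Finset.sum_congr rfl fun x _ => ?_
    rw [Finset.sum_comm]
    refine Finset.sum_congr rfl fun s _ => ?_
    rw [Finset.sum_comm]
    have hone : ∀ t : Fin d₂ → Bool,
        (∑ y₂ : Fin m₂ → Bool, X x * ((2 : ℝ) ^ d₁)⁻¹ * ((2 : ℝ) ^ d₂)⁻¹ *
          (if Ext₁ x s = z ∧ Ext₂ (Waste₁ x s) t = y₂ then 1 else 0))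
        = X x * ((2 : ℝ) ^ d₁)⁻¹ * ((2 : ℝ) ^ d₂)⁻¹ * (if Ext₁ x s = z then 1 else 0) := by
      intro t
      by_cases hA : Ext₁ x s = z
      · simp [hA, Finset.sum_ite_eq]
      · simp [hA]
    simp only [hone]
    rw [sum_const_fun]
    have h2 : ((2:ℝ) ^ d₂) ≠ 0 := by positivity
    field_simp
  -- marginal of J
  have hmargJ : ∀ z : Fin m₁ → Bool,
      (∑ xw, J (z, xw))
      = ∑ x, ∑ s, X x * ((2 : ℝ) ^ d₁)⁻¹ * (if Ext₁ x s = z then 1 else 0) := by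
    intro z
    simp only [hJdef]
    rw [Finset.sum_comm]
    refine Finset.sum_congr rfl fun x _ => ?_
    rw [Finset.sum_comm]
    refine Finset.sum_congr rfl fun s _ => ?_
    by_cases hA : Ext₁ x s = z
    · simp [hA, Finset.sum_ite_eq]
    · simp [hA]
  -- the joint distribution factored through J
  have hPJ : ∀ (z : Fin m₁ → Bool) (y₂ : Fin m₂ → Bool),
      (∑ x, ∑ s, ∑ t, X x * ((2 : ℝ) ^ d₁)⁻¹ * ((2 : ℝ) ^ d₂)⁻¹ *
        (if Ext₁ x s = z ∧ Ext₂ (Waste₁ x s) t = y₂ then 1 else 0))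
      = ∑ xw, ∑ t, J (z, xw) * ((2 : ℝ) ^ d₂)⁻¹ *
          (if Ext₂ xw t = y₂ then 1 else 0) := by
    intro z y₂
    simp only [hJdef]
    conv_rhs => simp only [Finset.sum_mul]
    conv_rhs => rw [sum_rot]
    refine Finset.sum_congr rfl fun x _ => ?_
    conv_rhs => rw [sum_rot]
    refine Finset.sum_congr rfl fun s _ => ?_
    conv_rhs => rw [Finset.sum_comm]
    refine Finset.sum_congr rfl fun t _ => ?_
    by_cases hA : Ext₁ x s = z
    · simp only [hA, true_and, mul_ite, ite_mul, mul_zero, zero_mul, mul_one]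
      rw [Finset.sum_eq_single (Waste₁ x s)]
      · simp
      · intro b _ hb
        simp [Ne.symm hb]
      · intro h
        exact absurd (Finset.mem_univ _) h
    · simp [hA]
  have hJpmf : IsPMF J := by
    refine ⟨hJnn, ?_⟩
    rw [Fintype.sum_prod_type]
    simp only [hmargJ]
    rw [Finset.sum_comm]
    have hone : ∀ x : Fin n → Bool,
        (∑ z : Fin m₁ → Bool, ∑ s : Fin d₁ → Bool,
          X x * ((2 : ℝ) ^ d₁)⁻¹ * (if Ext₁ x s = z then 1 else 0)) = X x := by
      intro x
      rw [Finset.sum_comm]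
      have h2 : ∀ s : Fin d₁ → Bool,
          (∑ z : Fin m₁ → Bool, X x * ((2 : ℝ) ^ d₁)⁻¹ * (if Ext₁ x s = z then 1 else 0))
          = X x * ((2 : ℝ) ^ d₁)⁻¹ := by
        intro s
        simp [Finset.sum_ite_eq, mul_ite, mul_one, mul_zero]
      simp only [h2]
      rw [sum_const_fun]
      have h3 : ((2:ℝ) ^ d₁) ≠ 0 := by positivity
      field_simp
    simp only [hone]
    exact hX.2
  have hJbound : ∀ q, J q ≤ (2 : ℝ) ^ (-k₁) * ((2 : ℝ) ^ d₁)⁻¹ := by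
    rintro ⟨z, xw⟩
    have hcount : (∑ x, ∑ s, (if Ext₁ x s = z ∧ Waste₁ x s = xw then (1:ℝ) else 0)) ≤ 1 := by
      have hstep : (∑ x, ∑ s, (if Ext₁ x s = z ∧ Waste₁ x s = xw then (1:ℝ) else 0))
          = ∑ p : (Fin n → Bool) × (Fin d₁ → Bool),
              (if Ext₁ p.1 p.2 = z ∧ Waste₁ p.1 p.2 = xw then (1:ℝ) else 0) := by
        rw [Fintype.sum_prod_type]
      rw [hstep, Finset.sum_boole]
      have hcard : (Finset.univ.filter fun p : (Fin n → Bool) × (Fin d₁ → Bool) =>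
          Ext₁ p.1 p.2 = z ∧ Waste₁ p.1 p.2 = xw).card ≤ 1 := by
        refine Finset.card_le_one.mpr fun p hp q hq => hinj ?_
        have hp' := (Finset.mem_filter.mp hp).2
        have hq' := (Finset.mem_filter.mp hq).2
        show (Ext₁ p.1 p.2, Waste₁ p.1 p.2) = (Ext₁ q.1 q.2, Waste₁ q.1 q.2)
        rw [hp'.1, hp'.2, hq'.1, hq'.2]
      exact_mod_cast hcard
    have hnn : (0:ℝ) ≤ (2 : ℝ) ^ (-k₁) * ((2 : ℝ) ^ d₁)⁻¹ := by positivity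
    calc J (z, xw) ≤ ∑ x, ∑ s, (2 : ℝ) ^ (-k₁) * ((2 : ℝ) ^ d₁)⁻¹ *
          (if Ext₁ x s = z ∧ Waste₁ x s = xw then 1 else 0) := by
          refine Finset.sum_le_sum fun x _ => Finset.sum_le_sum fun s _ => ?_
          refine mul_le_mul_of_nonneg_right
            (mul_le_mul_of_nonneg_right (hXk x) (by positivity)) (by positivity)
      _ = (2 : ℝ) ^ (-k₁) * ((2 : ℝ) ^ d₁)⁻¹ *
          (∑ x, ∑ s, (if Ext₁ x s = z ∧ Waste₁ x s = xw then (1:ℝ) else 0)) := by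
          rw [Finset.mul_sum]
          exact Finset.sum_congr rfl fun x _ => by rw [Finset.mul_sum]
      _ ≤ (2 : ℝ) ^ (-k₁) * ((2 : ℝ) ^ d₁)⁻¹ * 1 := mul_le_mul_of_nonneg_left hcount hnn
      _ = (2 : ℝ) ^ (-k₁) * ((2 : ℝ) ^ d₁)⁻¹ := mul_one _
  have hsup : ∑ z : Fin m₁ → Bool,
      (Finset.univ.sup' Finset.univ_nonempty fun xw => J (z, xw)) ≤ (2 : ℝ) ^ (-k₂) := by
    have h2 : (0:ℝ) < 2 := two_pos
    calc (∑ z : Fin m₁ → Bool,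
          (Finset.univ.sup' Finset.univ_nonempty fun xw => J (z, xw)))
        ≤ ∑ _z : Fin m₁ → Bool, (2 : ℝ) ^ (-k₁) * ((2 : ℝ) ^ d₁)⁻¹ :=
          Finset.sum_le_sum fun z _ => Finset.sup'_le _ _ fun xw _ => hJbound (z, xw)
      _ = (2:ℝ) ^ m₁ * ((2 : ℝ) ^ (-k₁) * ((2 : ℝ) ^ d₁)⁻¹) := sum_const_fun m₁ _
      _ ≤ (2 : ℝ) ^ (-k₂) := by
          rw [show ((2:ℝ) ^ d₁)⁻¹ = (2:ℝ) ^ (-(d₁:ℝ)) by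
              rw [← Real.rpow_natCast 2 d₁, ← Real.rpow_neg (le_of_lt h2)],
            ← Real.rpow_natCast 2 m₁, ← Real.rpow_add h2, ← Real.rpow_add h2]
          refine Real.rpow_le_rpow_of_exponent_le one_le_two ?_
          linarith
  rw [klu_chain _ hPnn]
  simp only
  refine add_le_add ?_ ?_
  · have he : (fun y₁ : Fin m₁ → Bool =>
        ∑ y₂ : Fin m₂ → Bool, ∑ x, ∑ s, ∑ t, X x * ((2 : ℝ) ^ d₁)⁻¹ * ((2 : ℝ) ^ d₂)⁻¹ *
          (if Ext₁ x s = y₁ ∧ Ext₂ (Waste₁ x s) t = y₂ then 1 else 0))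
        = fun y₁ => ∑ x, ∑ s, X x * ((2 : ℝ) ^ d₁)⁻¹ *
            (if Ext₁ x s = y₁ then 1 else 0) := funext hmargP
    rw [he]
    exact hExt₁ X hX hXk
  · refine le_trans (le_of_eq ?_) (hExt₂ (Fin m₁ → Bool) inferInstance J hJpmf hsup)
    refine Finset.sum_congr rfl fun z _ => ?_
    have hden : (∑ y₂' : Fin m₂ → Bool, ∑ x, ∑ s, ∑ t,
          X x * ((2 : ℝ) ^ d₁)⁻¹ * ((2 : ℝ) ^ d₂)⁻¹ *
          (if Ext₁ x s = z ∧ Ext₂ (Waste₁ x s) t = y₂' then 1 else 0))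
        = ∑ x', J (z, x') := (hmargP z).trans (hmargJ z).symm
    rw [hden]
    refine congrArg _ (congrArg KLuFin (funext fun y₂ => ?_))
    rw [hPJ z y₂, Finset.sum_div]
    refine Finset.sum_congr rfl fun xw _ => ?_
    rw [Finset.sum_div]
    exact Finset.sum_congr rfl fun t _ => by ring
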